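/- Let X ∈ ℝ^{m×d}, Y ∈ ℝ^{m×o}, W ∈ ℝ^{d×o}, σ² > 0, and set σ² = ∑ᵢ σᵢ². Let G ∈ ℝ^{c×m} have i.i.d. N(0,1) entries and N ∈ ℝ^{c×d} have i.i.d. N(0,σ²) entries, independent of G. Define X̃ = GX + N, Ỹ = GY. Then E[(1/c)·X̃ᵀ(X̃W − Ỹ) − σ²W] = Xᵀ(XW − Y); i.e., the coded-data gradient with the make-up term −σ²W is an unbiased estimate of the true gradient. -/

import Mathlib

open MeasureTheory ProbabilityTheory Matrix

section aux
open Real Filter Asymptotics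
open scoped ENNReal NNReal Topology

section moments
variable {v : NNReal}

lemma my_integral_gaussianReal (hv : v ≠ 0) (g : ℝ → ℝ) :
    ∫ x, g x ∂(gaussianReal 0 v) = ∫ x, gaussianPDFReal 0 v x * g x := by
  rw [gaussianReal_of_var_ne_zero 0 hv]
  have h : (gaussianPDF 0 v) = fun x => ((gaussianPDFReal 0 v x).toNNReal : ℝ≥0∞) := by
    funext x; rfl
  rw [h, integral_withDensity_eq_integral_smul
    ((measurable_gaussianPDFReal 0 v).real_toNNReal) g]
  congr 1; funext x
  rw [NNReal.smul_def, smul_eq_mul, Real.coe_toNNReal _ (gaussianPDFReal_nonneg 0 v x)]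

lemma my_integrable_gaussianReal (hv : v ≠ 0) (g : ℝ → ℝ) :
    Integrable g (gaussianReal 0 v) ↔
      Integrable (fun x => gaussianPDFReal 0 v x * g x) volume := by
  rw [gaussianReal_of_var_ne_zero 0 hv]
  have h : (gaussianPDF 0 v) = fun x => ((gaussianPDFReal 0 v x).toNNReal : ℝ≥0∞) := by
    funext x; rfl
  rw [h, integrable_withDensity_iff_integrable_smul
    ((measurable_gaussianPDFReal 0 v).real_toNNReal)]
  constructor <;> intro hh <;> refine hh.congr (Filter.Eventually.of_forall fun x => ?_) <;>
    simp only [NNReal.smul_def, smul_eq_mul,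
      Real.coe_toNNReal _ (gaussianPDFReal_nonneg 0 v x)]

lemma pdf_eq (hv : v ≠ 0) (x : ℝ) :
    gaussianPDFReal 0 v x = (√(2 * π * v))⁻¹ * rexp (-(2 * (v:ℝ))⁻¹ * x ^ 2) := by
  have hvpos : (0:ℝ) < v := by positivity
  rw [gaussianPDFReal]
  congr 1
  rw [sub_zero]
  field_simp

variable {b : ℝ}

lemma exp_tendsto_top (hb : 0 < b) :
    Tendsto (fun x : ℝ => rexp (-b * x ^ 2)) atTop (𝓝 0) :=
  Real.tendsto_exp_atBot.comp
    ((tendsto_pow_atTop two_ne_zero).const_mul_atTop_of_neg (neg_lt_zero.2 hb))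

lemma exp_tendsto_bot (hb : 0 < b) :
    Tendsto (fun x : ℝ => rexp (-b * x ^ 2)) atBot (𝓝 0) := by
  have h := (exp_tendsto_top hb).comp tendsto_neg_atBot_atTop
  simpa [Function.comp_def, neg_sq] using h

lemma xexp_tendsto_top (hb : 0 < b) :
    Tendsto (fun x : ℝ => x * rexp (-b * x ^ 2)) atTop (𝓝 0) := by
  have htop : Tendsto (fun x : ℝ => rexp (-(1/2) * x)) atTop (𝓝 0) :=
    Real.tendsto_exp_atBot.comp
      (tendsto_id.const_mul_atTop_of_neg (by norm_num : (-(1/2) : ℝ) < 0))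
  have h := (rpow_mul_exp_neg_mul_sq_isLittleO_exp_neg hb 1).isBigO.trans_tendsto htop
  simpa [Real.rpow_one] using h

lemma xexp_tendsto_bot (hb : 0 < b) :
    Tendsto (fun x : ℝ => x * rexp (-b * x ^ 2)) atBot (𝓝 0) := by
  have h := ((xexp_tendsto_top hb).comp tendsto_neg_atBot_atTop).neg
  simpa [Function.comp_def, neg_sq] using h

lemma integral_xexp (hb : 0 < b) : ∫ x : ℝ, x * rexp (-b * x ^ 2) = 0 := by
  have hderiv : ∀ x : ℝ, HasDerivAt (fun x : ℝ => -(2*b)⁻¹ * rexp (-b * x ^ 2))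
      (x * rexp (-b * x ^ 2)) x := by
    intro x
    have h := (((hasDerivAt_pow 2 x).const_mul (-b)).exp).const_mul (-(2*b)⁻¹)
    refine h.congr_deriv ?_
    field_simp
    ring
  have hbot := (exp_tendsto_bot hb).const_mul (-(2*b)⁻¹)
  have htop := (exp_tendsto_top hb).const_mul (-(2*b)⁻¹)
  rw [mul_zero] at hbot htop
  have := integral_of_hasDerivAt_of_tendsto hderiv (integrable_mul_exp_neg_mul_sq hb) hbot htop
  simpa using this

lemma integrable_sq_exp (hb : 0 < b) :
    Integrable (fun x : ℝ => x ^ 2 * rexp (-b * x ^ 2)) := by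
  have h := integrable_rpow_mul_exp_neg_mul_sq hb (s := 2) (by norm_num)
  have e : ∀ x : ℝ, x ^ (2:ℝ) = x ^ (2:ℕ) := fun x => by
    rw [show ((2:ℝ)) = ((2:ℕ):ℝ) by norm_num, Real.rpow_natCast]
  simpa [e] using h

lemma integral_sq_exp (hb : 0 < b) :
    ∫ x : ℝ, x ^ 2 * rexp (-b * x ^ 2) = (2*b)⁻¹ * √(π / b) := by
  have hderiv : ∀ x : ℝ, HasDerivAt (fun x : ℝ => -(2*b)⁻¹ * (x * rexp (-b * x ^ 2)))
      (x ^ 2 * rexp (-b * x ^ 2) - (2*b)⁻¹ * rexp (-b * x ^ 2)) x := by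
    intro x
    have h := ((hasDerivAt_id x).mul (((hasDerivAt_pow 2 x).const_mul (-b)).exp)).const_mul
      (-(2*b)⁻¹)
    refine h.congr_deriv ?_
    simp only [id]
    field_simp
    ring
  have hint : Integrable (fun x : ℝ =>
      x ^ 2 * rexp (-b * x ^ 2) - (2*b)⁻¹ * rexp (-b * x ^ 2)) :=
    (integrable_sq_exp hb).sub ((integrable_exp_neg_mul_sq hb).const_mul _)
  have hbot := (xexp_tendsto_bot hb).const_mul (-(2*b)⁻¹)
  have htop := (xexp_tendsto_top hb).const_mul (-(2*b)⁻¹)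
  rw [mul_zero] at hbot htop
  have h0 := integral_of_hasDerivAt_of_tendsto hderiv hint hbot htop
  rw [sub_zero] at h0
  have h1 : ∫ x : ℝ, (x ^ 2 * rexp (-b * x ^ 2) - (2*b)⁻¹ * rexp (-b * x ^ 2))
      = (∫ x : ℝ, x ^ 2 * rexp (-b * x ^ 2)) - (2*b)⁻¹ * ∫ x : ℝ, rexp (-b * x ^ 2) := by
    rw [integral_sub (integrable_sq_exp hb) ((integrable_exp_neg_mul_sq hb).const_mul _),
      integral_const_mul]
  rw [h1, integral_gaussian] at h0
  linarith [h0]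

lemma integrable_dirac0 {g : ℝ → ℝ} (hg : Measurable g) :
    Integrable g (Measure.dirac (0:ℝ)) :=
  ⟨hg.aestronglyMeasurable, by
    rw [HasFiniteIntegral, lintegral_dirac]; exact ENNReal.coe_lt_top⟩

lemma hb_pos {v : NNReal} (hv : v ≠ 0) : 0 < (2 * (v:ℝ))⁻¹ := by
  have : (0:ℝ) < v := by exact_mod_cast pos_iff_ne_zero.2 hv
  positivity

lemma integrable_id_gaussianReal (v : NNReal) :
    Integrable (fun x : ℝ => x) (gaussianReal 0 v) := by
  by_cases hv : v = 0
  · rw [hv, gaussianReal_zero_var]; exact integrable_dirac0 measurable_id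
  · rw [my_integrable_gaussianReal hv]
    have h : (fun x : ℝ => gaussianPDFReal 0 v x * x)
        = fun x => (√(2 * π * v))⁻¹ * (x * rexp (-(2 * (v:ℝ))⁻¹ * x ^ 2)) := by
      funext x; rw [pdf_eq hv]; ring
    rw [h]
    exact (integrable_mul_exp_neg_mul_sq (hb_pos hv)).const_mul _

lemma integral_id_gaussianReal' (v : NNReal) : ∫ x, x ∂(gaussianReal 0 v) = 0 := by
  by_cases hv : v = 0
  · rw [hv, gaussianReal_zero_var, integral_dirac]
  · rw [my_integral_gaussianReal hv]
    have h : (fun x : ℝ => gaussianPDFReal 0 v x * x)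
        = fun x => (√(2 * π * v))⁻¹ * (x * rexp (-(2 * (v:ℝ))⁻¹ * x ^ 2)) := by
      funext x; rw [pdf_eq hv]; ring
    rw [h, integral_const_mul, integral_xexp (hb_pos hv), mul_zero]

lemma integrable_sq_gaussianReal (v : NNReal) :
    Integrable (fun x : ℝ => x ^ 2) (gaussianReal 0 v) := by
  by_cases hv : v = 0
  · rw [hv, gaussianReal_zero_var]; exact integrable_dirac0 (measurable_id.pow_const 2)
  · rw [my_integrable_gaussianReal hv]
    have h : (fun x : ℝ => gaussianPDFReal 0 v x * x ^ 2)
        = fun x => (√(2 * π * v))⁻¹ * (x ^ 2 * rexp (-(2 * (v:ℝ))⁻¹ * x ^ 2)) := by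
      funext x; rw [pdf_eq hv]; ring
    rw [h]
    exact (integrable_sq_exp (hb_pos hv)).const_mul _

lemma integral_sq_gaussianReal' (v : NNReal) :
    ∫ x, x ^ 2 ∂(gaussianReal 0 v) = (v : ℝ) := by
  by_cases hv : v = 0
  · rw [hv, gaussianReal_zero_var, integral_dirac]; simp
  · rw [my_integral_gaussianReal hv]
    have h : (fun x : ℝ => gaussianPDFReal 0 v x * x ^ 2)
        = fun x => (√(2 * π * v))⁻¹ * (x ^ 2 * rexp (-(2 * (v:ℝ))⁻¹ * x ^ 2)) := by
      funext x; rw [pdf_eq hv]; ring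
    have hvpos : (0:ℝ) < v := by exact_mod_cast pos_iff_ne_zero.2 hv
    rw [h, integral_const_mul, integral_sq_exp (hb_pos hv)]
    rw [show π / (2 * (v:ℝ))⁻¹ = 2 * π * v by field_simp]
    rw [show (2 * (2 * (v:ℝ))⁻¹)⁻¹ = v by field_simp]
    have hS : 0 < √(2 * π * v) := Real.sqrt_pos.2 (by positivity)
    field_simp
end moments


section rv
variable {Ω : Type*} [MeasureSpace Ω] [IsProbabilityMeasure (ℙ : Measure Ω)]

lemma rv_integrable {Z : Ω → ℝ} {v : NNReal} (hm : Measurable Z)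
    (hd : Measure.map Z ℙ = gaussianReal 0 v) : Integrable Z ℙ := by
  have h := (integrable_map_measure (μ := ℙ) (f := Z) (g := fun x : ℝ => x)
    measurable_id.aestronglyMeasurable hm.aemeasurable).mp
  rw [hd] at h
  exact h (integrable_id_gaussianReal v)

lemma rv_integral {Z : Ω → ℝ} {v : NNReal} (hm : Measurable Z)
    (hd : Measure.map Z ℙ = gaussianReal 0 v) : ∫ ω, Z ω ∂ℙ = 0 := by
  have h := integral_map (μ := ℙ) (f := fun x : ℝ => x) hm.aemeasurable
    measurable_id.aestronglyMeasurable
  rw [hd, integral_id_gaussianReal' v] at h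
  exact h.symm

lemma rv_sq_integrable {Z : Ω → ℝ} {v : NNReal} (hm : Measurable Z)
    (hd : Measure.map Z ℙ = gaussianReal 0 v) : Integrable (fun ω => Z ω ^ 2) ℙ := by
  have h := (integrable_map_measure (μ := ℙ) (f := Z) (g := fun x : ℝ => x ^ 2)
    (measurable_id.pow_const 2).aestronglyMeasurable hm.aemeasurable).mp
  rw [hd] at h
  exact h (integrable_sq_gaussianReal v)

lemma rv_sq_integral {Z : Ω → ℝ} {v : NNReal} (hm : Measurable Z)
    (hd : Measure.map Z ℙ = gaussianReal 0 v) : ∫ ω, Z ω ^ 2 ∂ℙ = (v : ℝ) := by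
  have h := integral_map (μ := ℙ) (f := fun x : ℝ => x ^ 2) hm.aemeasurable
    (measurable_id.pow_const 2).aestronglyMeasurable
  rw [hd, integral_sq_gaussianReal' v] at h
  exact h.symm

lemma key {ι : Type*} [Fintype ι] [DecidableEq ι]
    (Z : ι → Ω → ℝ) (vv : ι → NNReal)
    (hm : ∀ a, Measurable (Z a))
    (hd : ∀ a, Measure.map (Z a) ℙ = gaussianReal 0 (vv a))
    (hind : ∀ a b, a ≠ b → IndepFun (Z a) (Z b) ℙ)
    (α β : ι → ℝ) :
    Integrable (fun ω => (∑ a, α a * Z a ω) * (∑ b, β b * Z b ω)) ℙ ∧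
    ∫ ω, (∑ a, α a * Z a ω) * (∑ b, β b * Z b ω) ∂ℙ
      = ∑ a, α a * β a * (vv a : ℝ) := by
  have hZint : ∀ a, Integrable (Z a) ℙ := fun a => rv_integrable (hm a) (hd a)
  have hprod : ∀ a b, Integrable (fun ω => Z a ω * Z b ω) ℙ := by
    intro a b
    rcases eq_or_ne a b with rfl | h
    · simpa [pow_two] using rv_sq_integrable (hm a) (hd a)
    · exact (hind a b h).integrable_mul (hZint a) (hZint b)
  have hPI : ∀ a b, ∫ ω, Z a ω * Z b ω ∂ℙ = if a = b then (vv a : ℝ) else 0 := by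
    intro a b
    rcases eq_or_ne a b with rfl | h
    · simp only [if_pos rfl, ← pow_two]
      exact rv_sq_integral (hm a) (hd a)
    · have h2 := (hind a b h).integral_mul_eq_mul_integral (hZint a).aestronglyMeasurable
        (hZint b).aestronglyMeasurable
      rw [rv_integral (hm a) (hd a), zero_mul] at h2
      rw [if_neg h]
      simpa [Pi.mul_apply] using h2
  have hpt : (fun ω => (∑ a, α a * Z a ω) * (∑ b, β b * Z b ω))
      = fun ω => ∑ a, ∑ b, (α a * β b) * (Z a ω * Z b ω) := by
    funext ω
    rw [Finset.sum_mul_sum]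
    refine Finset.sum_congr rfl fun a _ => Finset.sum_congr rfl fun b _ => ?_
    ring
  rw [hpt]
  have hint : ∀ a ∈ Finset.univ, Integrable (fun ω => ∑ b, (α a * β b) * (Z a ω * Z b ω)) ℙ :=
    fun a _ => integrable_finset_sum _ (fun b _ => (hprod a b).const_mul _)
  constructor
  · exact integrable_finset_sum _ hint
  · rw [integral_finset_sum _ hint]
    refine Finset.sum_congr rfl fun a _ => ?_
    rw [integral_finset_sum _ (fun b _ => (hprod a b).const_mul _)]
    have : ∀ b, ∫ ω, (α a * β b) * (Z a ω * Z b ω) ∂ℙ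
        = (α a * β b) * if a = b then (vv a : ℝ) else 0 := by
      intro b
      rw [integral_const_mul, hPI a b]
    simp only [this, mul_ite, mul_zero]
    simp
end rv

end aux

/-- Unbiasedness of the coded-data gradient with make-up term: with `X̃ = G X + N`,
`Ỹ = G Y`, where `G` has i.i.d. `N(0,1)` entries and `N` has i.i.d. `N(0,σ²)` entries,
independent of each other, and `σ² = ∑ᵢ σᵢ²`,
`E[(1/c) X̃ᵀ (X̃ W − Ỹ) − σ² W] = Xᵀ (X W − Y)` entrywise. -/
theorem stmt9 {Ω : Type*} [MeasureSpace Ω] [IsProbabilityMeasure (ℙ : Measure Ω)]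
    {c m d o nDev : ℕ} (hc : 0 < c)
    (X : Matrix (Fin m) (Fin d) ℝ) (Y : Matrix (Fin m) (Fin o) ℝ)
    (W : Matrix (Fin d) (Fin o) ℝ)
    (σsq : Fin nDev → ℝ) (hσi : ∀ i, 0 < σsq i)
    (v : NNReal) (hv : (v : ℝ) = ∑ i, σsq i)
    (G : Ω → Matrix (Fin c) (Fin m) ℝ) (N : Ω → Matrix (Fin c) (Fin d) ℝ)
    (hGmeas : ∀ i j, Measurable fun ω => G ω i j)
    (hNmeas : ∀ i j, Measurable fun ω => N ω i j)
    (hGdist : ∀ i j, Measure.map (fun ω => G ω i j) ℙ = gaussianReal 0 1)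
    (hNdist : ∀ i j, Measure.map (fun ω => N ω i j) ℙ = gaussianReal 0 v)
    (hindep : iIndepFun (m := fun _ : (Fin c × Fin m) ⊕ (Fin c × Fin d) =>
        (inferInstance : MeasurableSpace ℝ))
      (fun p ω => Sum.elim (fun q => G ω q.1 q.2) (fun q => N ω q.1 q.2) p) ℙ) :
    ∀ i j,
      (∫ ω, ((1 / (c : ℝ)) • ((G ω * X + N ω)ᵀ * ((G ω * X + N ω) * W - G ω * Y))
          - (v : ℝ) • W) i j ∂ℙ)
        = (Xᵀ * (X * W - Y)) i j := by
  intro i j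
  set ι := (Fin c × Fin m) ⊕ (Fin c × Fin d) with hι
  let Z : ι → Ω → ℝ :=
    fun p ω => Sum.elim (fun q => G ω q.1 q.2) (fun q => N ω q.1 q.2) p
  let vv : ι → NNReal := Sum.elim (fun _ => 1) (fun _ => v)
  have hZm : ∀ a, Measurable (Z a) := by
    rintro (⟨k, p⟩ | ⟨k, l⟩)
    exacts [hGmeas k p, hNmeas k l]
  have hZd : ∀ a, Measure.map (Z a) ℙ = gaussianReal 0 (vv a) := by
    rintro (⟨k, p⟩ | ⟨k, l⟩)
    exacts [hGdist k p, hNdist k l]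
  have hZind : ∀ a b, a ≠ b → IndepFun (Z a) (Z b) ℙ := fun a b hab =>
    hindep.indepFun hab
  let α : Fin c → ι → ℝ := fun k =>
    Sum.elim (fun q => if q.1 = k then X q.2 i else 0)
      (fun q => if q.1 = k then (if q.2 = i then 1 else 0) else 0)
  let β : Fin c → ι → ℝ := fun k =>
    Sum.elim (fun q => if q.1 = k then (∑ l, X q.2 l * W l j) - Y q.2 j else 0)
      (fun q => if q.1 = k then W q.2 j else 0)
  have hkey := fun k => key Z vv hZm hZd hZind (α k) (β k)
  have hentry : ∀ ω, ((1 / (c : ℝ)) • ((G ω * X + N ω)ᵀ * ((G ω * X + N ω) * W - G ω * Y))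
          - (v : ℝ) • W) i j
      = (1 / (c:ℝ)) * (∑ k, (∑ a, α k a * Z a ω) * (∑ b, β k b * Z b ω))
          - (v:ℝ) * W i j := by
    intro ω
    have hα : ∀ k, (∑ a, α k a * Z a ω) = (∑ p, X p i * G ω k p) + N ω k i := by
      intro k
      rw [Fintype.sum_sum_type]
      simp [α, Z, Fintype.sum_prod_type, ite_mul, zero_mul, Finset.sum_ite_eq',
        Finset.mem_univ, if_true]
    have hβ : ∀ k, (∑ b, β k b * Z b ω)
        = (∑ q, ((∑ l, X q l * W l j) - Y q j) * G ω k q) + ∑ l, W l j * N ω k l := by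
      intro k
      rw [Fintype.sum_sum_type]
      simp [β, Z, Fintype.sum_prod_type, ite_mul, zero_mul, Finset.sum_ite_eq',
        Finset.mem_univ, if_true]
    simp only [Matrix.sub_apply, Matrix.smul_apply, smul_eq_mul, Matrix.mul_apply,
      Matrix.transpose_apply, Matrix.add_apply]
    congr 1
    congr 1
    refine Finset.sum_congr rfl fun k _ => ?_
    rw [hα, hβ]
    congr 1
    · have e0 : ∑ p, X p i * G ω k p = ∑ x, G ω k x * X x i :=
        Finset.sum_congr rfl fun p _ => mul_comm _ _
      rw [e0, add_comm]
    · have e1 : ∑ l, ((∑ x, G ω k x * X x l) + N ω k l) * W l j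
          = (∑ q, (∑ l, X q l * W l j) * G ω k q) + ∑ l, W l j * N ω k l := by
        simp only [add_mul, Finset.sum_add_distrib, Finset.sum_mul]
        congr 1
        · rw [Finset.sum_comm]
          exact Finset.sum_congr rfl fun q _ => Finset.sum_congr rfl fun l _ => by ring
        · exact Finset.sum_congr rfl fun l _ => mul_comm _ _
      have e2 : ∑ x, G ω k x * Y x j = ∑ q, Y q j * G ω k q :=
        Finset.sum_congr rfl fun q _ => mul_comm _ _
      rw [e1, e2]
      simp only [sub_mul, Finset.sum_sub_distrib]
      ring
  have hval : ∀ k : Fin c, (∑ a, α k a * β k a * (vv a : ℝ))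
      = (∑ q, X q i * ((∑ l, X q l * W l j) - Y q j)) + (v:ℝ) * W i j := by
    intro k
    rw [Fintype.sum_sum_type]
    simp [α, β, vv, Fintype.sum_prod_type, ite_mul, mul_ite, zero_mul, mul_zero,
      Finset.sum_ite_eq', Finset.mem_univ, if_true, mul_one]
    ring
  simp only [hentry]
  have hSint : Integrable
      (fun ω => ∑ k, (∑ a, α k a * Z a ω) * (∑ b, β k b * Z b ω)) ℙ :=
    integrable_finset_sum _ fun k _ => (hkey k).1
  rw [integral_sub (hSint.const_mul _) (integrable_const _), integral_const_mul,
    integral_finset_sum _ (fun k _ => (hkey k).1), integral_const]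
  rw [Finset.sum_congr rfl fun k _ => (hkey k).2.trans (hval k), Finset.sum_const,
    Finset.card_univ, Fintype.card_fin]
  have hrhs : (Xᵀ * (X * W - Y)) i j
      = ∑ q, X q i * ((∑ l, X q l * W l j) - Y q j) := by
    simp [Matrix.mul_apply, Matrix.sub_apply, Matrix.transpose_apply]
  rw [hrhs]
  have hc' : (c:ℝ) ≠ 0 := Nat.cast_ne_zero.2 hc.ne'
  simp only [measure_univ, probReal_univ, ENNReal.toReal_one, smul_eq_mul, one_mul, nsmul_eq_mul]
  field_simp
  ring
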